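/- Let G be the group presented by generators x, y and relators x², y⁵ (the free product Z/2 * Z/5). Then the elements A = xy³xy³, B = y³xy³x, and C = xyxy generate a free subgroup of G of rank 3; that is, the homomorphism from the free group of rank 3 to G sending the three free generators to A, B, C respectively is injective. -/

import Mathlib

/-- The relators `x², y⁵` of the group `⟨x, y | x², y⁵⟩ = ℤ/2 * ℤ/5`, with `x, y` the
generators `0, 1 : Fin 2`. -/
def relsZ2Z5 : Set (FreeGroup (Fin 2)) := {FreeGroup.of 0 ^ 2, FreeGroup.of 1 ^ 5}

open Monoid Monoid.CoprodI Monoid.CoprodI.Word Pointwise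
abbrev Mf : Fin 2 → Type := fun i => Multiplicative (ZMod (2 + 3 * (i : ℕ)))
abbrev Pf := Monoid.CoprodI Mf
def gx : Mf 0 := Multiplicative.ofAdd (1 : ZMod 2)
def gy (k : ZMod 5) : Mf 1 := Multiplicative.ofAdd k

lemma prepend {i : Fin 2} (m : Mf i) (hm : m ≠ 1) (w : Word Mf) (hw : w.fstIdx ≠ some i) :
    (CoprodI.of m • w).toList = ⟨i, m⟩ :: w.toList := by
  rw [← Word.cons_eq_smul (h1 := hw) (h2 := hm)]; rfl

lemma destruct (w : Word Mf) {i : Fin 2} {m : Mf i} {t} (h : w.toList = ⟨i, m⟩ :: t) :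
    ∃ w' : Word Mf, w'.toList = t ∧ w'.fstIdx ≠ some i ∧ m ≠ 1 ∧ w = CoprodI.of m • w' := by
  obtain ⟨l, h1, h2⟩ := w
  simp only at h
  subst h
  have hm : m ≠ 1 := h1 _ (List.mem_cons_self)
  have hch := h2
  rw [List.isChain_cons] at hch
  have hne : (⟨t, fun l hl => h1 l (List.mem_cons_of_mem _ hl), hch.2⟩ : Word Mf).fstIdx ≠ some i := by
    rw [Word.fstIdx_ne_iff]; exact fun l hl => hch.1 l hl
  refine ⟨_, rfl, hne, hm, ?_⟩
  rw [← Word.cons_eq_smul (h1 := hne) (h2 := hm)]; rfl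

lemma fstIdx_eq {w : Word Mf} {i : Fin 2} {m : Mf i} {t} (h : w.toList = ⟨i, m⟩ :: t) :
    w.fstIdx = some i := by simp [Word.fstIdx, h]

lemma fstIdx_nil {w : Word Mf} (h : w.toList = []) {i : Fin 2} : w.fstIdx ≠ some i := by
  simp [Word.fstIdx, h]

lemma mf0_eq : ∀ m : Multiplicative (ZMod 2), m ≠ 1 → m = Multiplicative.ofAdd 1 := by decide

lemma fin2_cases (i : Fin 2) : i = 0 ∨ i = 1 := by omega

lemma step_y (k : ZMod 5) (hk : gy k ≠ 1) (w : Word Mf)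
    (hw : ∀ t, w.toList ≠ ⟨1, gy (-k)⟩ :: ⟨0, gx⟩ :: t) :
    (CoprodI.of (gy k) • w).fstIdx ≠ some 0 := by
  rcases hl : w.toList with _ | ⟨⟨i, m⟩, t⟩
  · rw [fstIdx_eq (prepend _ hk w (fstIdx_nil hl))]; decide
  · rcases fin2_cases i with rfl | rfl
    · rw [fstIdx_eq (prepend _ hk w (by rw [fstIdx_eq hl]; decide))]; decide
    · obtain ⟨w', hw't, hw'i, hm, rfl⟩ := destruct w hl
      rw [smul_smul, ← MonoidHom.map_mul]
      by_cases hc : gy k * m = 1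
      · rw [hc, MonoidHom.map_one, one_smul]
        rcases hl' : w'.toList with _ | ⟨⟨i', m'⟩, t'⟩
        · exact fstIdx_nil hl'
        · rcases fin2_cases i' with rfl | rfl
          · exfalso
            have hm' : m' = gx := mf0_eq m' (w'.ne_one _ (hl' ▸ List.mem_cons_self))
            have hmk : m = gy (-k) := by
              have h' : m = (gy k)⁻¹ := eq_inv_of_mul_eq_one_right hc
              rw [h']; rfl
            refine hw t' ?_
            rw [prepend m hm w' hw'i, hl', hmk, hm']
          · rw [fstIdx_eq hl']; decide
      · rw [fstIdx_eq (prepend _ hc w' hw'i)]; decide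

lemma hgx1 : gx ≠ 1 := by decide

lemma step_xy (k : ZMod 5) (hk : gy k ≠ 1) (w : Word Mf)
    (hw : ∀ t, w.toList ≠ ⟨0, gx⟩ :: ⟨1, gy (-k)⟩ :: t) :
    (CoprodI.of (gy k) • CoprodI.of gx • w).fstIdx ≠ some 0 := by
  rcases hl : w.toList with _ | ⟨⟨i, m⟩, t⟩
  · have h1 := prepend gx hgx1 w (fstIdx_nil hl)
    rw [fstIdx_eq (prepend _ hk _ (by rw [fstIdx_eq h1]; decide))]; decide
  · rcases fin2_cases i with rfl | rfl
    · obtain ⟨w', hw't, hw'i, hm, rfl⟩ := destruct w hl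
      have hm' : m = gx := mf0_eq m hm
      subst hm'
      have hxx : CoprodI.of gx • CoprodI.of gx • w' = w' := by
        rw [smul_smul, ← MonoidHom.map_mul, show gx * gx = 1 by decide,
          MonoidHom.map_one, one_smul]
      rw [hxx]
      refine step_y k hk w' ?_
      intro t' ht'
      refine hw (⟨0, gx⟩ :: t') ?_
      rw [prepend gx hgx1 w' hw'i, ht']
    · have h1 := prepend gx hgx1 w (by rw [fstIdx_eq hl]; decide)
      rw [fstIdx_eq (prepend _ hk _ (by rw [fstIdx_eq h1]; decide))]; decide

lemma prep3 (k : ZMod 5) (hk : gy k ≠ 1) (w : Word Mf) (h : w.fstIdx ≠ some 0) :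
    ∃ t, (CoprodI.of gx • CoprodI.of (gy k) • CoprodI.of gx • w).toList
      = ⟨0, gx⟩ :: ⟨1, gy k⟩ :: t := by
  have h1 := prepend gx hgx1 w h
  have h2 := prepend _ hk _ (by rw [fstIdx_eq h1]; decide)
  have h3 := prepend gx hgx1 _ (by rw [fstIdx_eq h2]; decide)
  exact ⟨_, by rw [h3, h2]⟩

lemma prep2 (k : ZMod 5) (hk : gy k ≠ 1) (w : Word Mf) (h : w.fstIdx ≠ some 0) :
    ∃ t, (CoprodI.of (gy k) • CoprodI.of gx • w).toList = ⟨1, gy k⟩ :: ⟨0, gx⟩ :: t := by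
  have h1 := prepend gx hgx1 w h
  have h2 := prepend _ hk _ (by rw [fstIdx_eq h1]; decide)
  exact ⟨_, by rw [h2, h1]⟩

def pre2 (u v : (i : Fin 2) × Mf i) : Set (Word Mf) := {w | ∃ t, w.toList = u :: v :: t}

lemma disjoint_pre2 {u v u' v' : (i : Fin 2) × Mf i} (h : u ≠ u' ∨ v ≠ v') :
    Disjoint (pre2 u v) (pre2 u' v') := by
  rw [Set.disjoint_left]
  rintro w ⟨t, ht⟩ ⟨t', ht'⟩
  rw [ht] at ht'
  simp only [List.cons.injEq] at ht'
  rcases h with h | h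
  · exact h ht'.1
  · exact h ht'.2.1

lemma pre2_nonempty_xy (k : ZMod 5) (hk : gy k ≠ 1) : (pre2 ⟨0, gx⟩ ⟨1, gy k⟩).Nonempty := by
  have h1 := prepend (gy k) hk Word.empty (fstIdx_nil rfl)
  have h2 := prepend gx hgx1 _ (by rw [fstIdx_eq h1]; decide)
  exact ⟨_, _, by rw [h2, h1]⟩

lemma pre2_nonempty_yx (k : ZMod 5) (hk : gy k ≠ 1) : (pre2 ⟨1, gy k⟩ ⟨0, gx⟩).Nonempty := by
  have h1 := prepend gx hgx1 Word.empty (fstIdx_nil rfl)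
  have h2 := prepend (gy k) hk _ (by rw [fstIdx_eq h1]; decide)
  exact ⟨_, _, by rw [h2, h1]⟩

def Xs : Fin 3 → Set (Word Mf) := fun i =>
  if i = 0 then pre2 ⟨0, gx⟩ ⟨1, gy 3⟩
  else if i = 1 then pre2 ⟨1, gy 3⟩ ⟨0, gx⟩
  else pre2 ⟨0, gx⟩ ⟨1, gy 1⟩

def Ys : Fin 3 → Set (Word Mf) := fun i =>
  if i = 0 then pre2 ⟨1, gy 2⟩ ⟨0, gx⟩
  else if i = 1 then pre2 ⟨0, gx⟩ ⟨1, gy 2⟩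
  else pre2 ⟨1, gy 4⟩ ⟨0, gx⟩

lemma fin3_cases (i : Fin 3) : i = 0 ∨ i = 1 ∨ i = 2 := by omega

lemma hXnonempty : ∀ i, (Xs i).Nonempty := by
  intro i
  rcases fin3_cases i with rfl | rfl | rfl <;> simp only [Xs] <;> norm_num
  · exact pre2_nonempty_xy 3 (by decide)
  · exact pre2_nonempty_yx 3 (by decide)
  · exact pre2_nonempty_xy 1 (by decide)

lemma hXdisj : Pairwise (Function.onFun Disjoint Xs) := by
  intro i j hij
  rcases fin3_cases i with rfl | rfl | rfl <;> rcases fin3_cases j with rfl | rfl | rfl <;>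
    first
      | exact absurd rfl hij
      | (simp only [Function.onFun, Xs]; norm_num; exact disjoint_pre2 (by decide))

lemma hYdisj : Pairwise (Function.onFun Disjoint Ys) := by
  intro i j hij
  rcases fin3_cases i with rfl | rfl | rfl <;> rcases fin3_cases j with rfl | rfl | rfl <;>
    first
      | exact absurd rfl hij
      | (simp only [Function.onFun, Ys]; norm_num; exact disjoint_pre2 (by decide))

lemma hXYdisj : ∀ i j, Disjoint (Xs i) (Ys j) := by
  intro i j
  rcases fin3_cases i with rfl | rfl | rfl <;> rcases fin3_cases j with rfl | rfl | rfl <;>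
    (simp only [Xs, Ys]; norm_num; exact disjoint_pre2 (by decide))

def bfun : Fin 3 → Pf := fun i =>
  if i = 0 then CoprodI.of gx * CoprodI.of (gy 3) * CoprodI.of gx * CoprodI.of (gy 3)
  else if i = 1 then CoprodI.of (gy 3) * CoprodI.of gx * CoprodI.of (gy 3) * CoprodI.of gx
  else CoprodI.of gx * CoprodI.of (gy 1) * CoprodI.of gx * CoprodI.of (gy 1)

lemma of_mul_cancel {i : Fin 2} (a b : Mf i) (h : a * b = 1) (z : Pf) :
    CoprodI.of a * (CoprodI.of b * z) = z := by
  rw [← mul_assoc, ← MonoidHom.map_mul, h, MonoidHom.map_one, one_mul]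

lemma of_mul_cancel' {i : Fin 2} (a b : Mf i) (h : a * b = 1) :
    (CoprodI.of a : Pf) * CoprodI.of b = 1 := by
  rw [← MonoidHom.map_mul, h, MonoidHom.map_one]

lemma hX : ∀ i, bfun i • (Ys i)ᶜ ⊆ Xs i := by
  intro i
  rcases fin3_cases i with rfl | rfl | rfl
  · show (CoprodI.of gx * CoprodI.of (gy 3) * CoprodI.of gx * CoprodI.of (gy 3)) •
        (pre2 ⟨1, gy 2⟩ ⟨0, gx⟩)ᶜ ⊆ pre2 ⟨0, gx⟩ ⟨1, gy 3⟩
    intro z hz; rw [Set.mem_smul_set] at hz; obtain ⟨w, hw, rfl⟩ := hz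
    have hw' : ∀ t, w.toList ≠ ⟨1, gy (-3)⟩ :: ⟨0, gx⟩ :: t := by
      rw [show (-3 : ZMod 5) = 2 from by decide]
      exact fun t ht => hw ⟨t, ht⟩
    obtain ⟨t, ht⟩ := prep3 3 (by decide) _ (step_y 3 (by decide) w hw')
    exact ⟨t, by rw [mul_smul, mul_smul, mul_smul]; exact ht⟩
  · show (CoprodI.of (gy 3) * CoprodI.of gx * CoprodI.of (gy 3) * CoprodI.of gx) •
        (pre2 ⟨0, gx⟩ ⟨1, gy 2⟩)ᶜ ⊆ pre2 ⟨1, gy 3⟩ ⟨0, gx⟩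
    intro z hz; rw [Set.mem_smul_set] at hz; obtain ⟨w, hw, rfl⟩ := hz
    have hw' : ∀ t, w.toList ≠ ⟨0, gx⟩ :: ⟨1, gy (-3)⟩ :: t := by
      rw [show (-3 : ZMod 5) = 2 from by decide]
      exact fun t ht => hw ⟨t, ht⟩
    obtain ⟨t, ht⟩ := prep2 3 (by decide) _ (step_xy 3 (by decide) w hw')
    exact ⟨t, by rw [mul_smul, mul_smul, mul_smul]; exact ht⟩
  · show (CoprodI.of gx * CoprodI.of (gy 1) * CoprodI.of gx * CoprodI.of (gy 1)) •
        (pre2 ⟨1, gy 4⟩ ⟨0, gx⟩)ᶜ ⊆ pre2 ⟨0, gx⟩ ⟨1, gy 1⟩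
    intro z hz; rw [Set.mem_smul_set] at hz; obtain ⟨w, hw, rfl⟩ := hz
    have hw' : ∀ t, w.toList ≠ ⟨1, gy (-1)⟩ :: ⟨0, gx⟩ :: t := by
      rw [show (-1 : ZMod 5) = 4 from by decide]
      exact fun t ht => hw ⟨t, ht⟩
    obtain ⟨t, ht⟩ := prep3 1 (by decide) _ (step_y 1 (by decide) w hw')
    exact ⟨t, by rw [mul_smul, mul_smul, mul_smul]; exact ht⟩

lemma binv0 : (CoprodI.of gx * CoprodI.of (gy 3) * CoprodI.of gx * CoprodI.of (gy 3))⁻¹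
    = CoprodI.of (gy 2) * CoprodI.of gx * CoprodI.of (gy 2) * CoprodI.of gx := by
  symm
  apply eq_inv_of_mul_eq_one_left
  simp only [mul_assoc]
  rw [of_mul_cancel gx gx (by decide), of_mul_cancel (gy 2) (gy 3) (by decide),
    of_mul_cancel gx gx (by decide), of_mul_cancel' (gy 2) (gy 3) (by decide)]

lemma binv1 : (CoprodI.of (gy 3) * CoprodI.of gx * CoprodI.of (gy 3) * CoprodI.of gx)⁻¹
    = CoprodI.of gx * CoprodI.of (gy 2) * CoprodI.of gx * CoprodI.of (gy 2) := by
  symm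
  apply eq_inv_of_mul_eq_one_left
  simp only [mul_assoc]
  rw [of_mul_cancel (gy 2) (gy 3) (by decide), of_mul_cancel gx gx (by decide),
    of_mul_cancel (gy 2) (gy 3) (by decide), of_mul_cancel' gx gx (by decide)]

lemma binv2 : (CoprodI.of gx * CoprodI.of (gy 1) * CoprodI.of gx * CoprodI.of (gy 1))⁻¹
    = CoprodI.of (gy 4) * CoprodI.of gx * CoprodI.of (gy 4) * CoprodI.of gx := by
  symm
  apply eq_inv_of_mul_eq_one_left
  simp only [mul_assoc]
  rw [of_mul_cancel gx gx (by decide), of_mul_cancel (gy 4) (gy 1) (by decide),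
    of_mul_cancel gx gx (by decide), of_mul_cancel' (gy 4) (gy 1) (by decide)]

lemma hY : ∀ i, bfun⁻¹ i • (Xs i)ᶜ ⊆ Ys i := by
  intro i
  rcases fin3_cases i with rfl | rfl | rfl
  · show (CoprodI.of gx * CoprodI.of (gy 3) * CoprodI.of gx * CoprodI.of (gy 3))⁻¹ •
        (pre2 ⟨0, gx⟩ ⟨1, gy 3⟩)ᶜ ⊆ pre2 ⟨1, gy 2⟩ ⟨0, gx⟩
    rw [binv0]
    intro z hz; rw [Set.mem_smul_set] at hz; obtain ⟨w, hw, rfl⟩ := hz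
    have hw' : ∀ t, w.toList ≠ ⟨0, gx⟩ :: ⟨1, gy (-2)⟩ :: t := by
      rw [show (-2 : ZMod 5) = 3 from by decide]
      exact fun t ht => hw ⟨t, ht⟩
    obtain ⟨t, ht⟩ := prep2 2 (by decide) _ (step_xy 2 (by decide) w hw')
    exact ⟨t, by rw [mul_smul, mul_smul, mul_smul]; exact ht⟩
  · show (CoprodI.of (gy 3) * CoprodI.of gx * CoprodI.of (gy 3) * CoprodI.of gx)⁻¹ •
        (pre2 ⟨1, gy 3⟩ ⟨0, gx⟩)ᶜ ⊆ pre2 ⟨0, gx⟩ ⟨1, gy 2⟩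
    rw [binv1]
    intro z hz; rw [Set.mem_smul_set] at hz; obtain ⟨w, hw, rfl⟩ := hz
    have hw' : ∀ t, w.toList ≠ ⟨1, gy (-2)⟩ :: ⟨0, gx⟩ :: t := by
      rw [show (-2 : ZMod 5) = 3 from by decide]
      exact fun t ht => hw ⟨t, ht⟩
    obtain ⟨t, ht⟩ := prep3 2 (by decide) _ (step_y 2 (by decide) w hw')
    exact ⟨t, by rw [mul_smul, mul_smul, mul_smul]; exact ht⟩
  · show (CoprodI.of gx * CoprodI.of (gy 1) * CoprodI.of gx * CoprodI.of (gy 1))⁻¹ •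
        (pre2 ⟨0, gx⟩ ⟨1, gy 1⟩)ᶜ ⊆ pre2 ⟨1, gy 4⟩ ⟨0, gx⟩
    rw [binv2]
    intro z hz; rw [Set.mem_smul_set] at hz; obtain ⟨w, hw, rfl⟩ := hz
    have hw' : ∀ t, w.toList ≠ ⟨0, gx⟩ :: ⟨1, gy (-4)⟩ :: t := by
      rw [show (-4 : ZMod 5) = 1 from by decide]
      exact fun t ht => hw ⟨t, ht⟩
    obtain ⟨t, ht⟩ := prep2 4 (by decide) _ (step_xy 4 (by decide) w hw')
    exact ⟨t, by rw [mul_smul, mul_smul, mul_smul]; exact ht⟩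

lemma keyinj : Function.Injective ⇑(FreeGroup.lift bfun) :=
  FreeGroup.injective_lift_of_ping_pong bfun Xs Ys hXnonempty hXdisj hYdisj hXYdisj hX hY

def fgen : Fin 2 → Pf := fun i => if i = 0 then CoprodI.of gx else CoprodI.of (gy 1)

lemma hrels : ∀ r ∈ relsZ2Z5, FreeGroup.lift fgen r = 1 := by
  intro r hr
  rcases hr with rfl | rfl
  · rw [map_pow, FreeGroup.lift_apply_of]
    show (CoprodI.of gx) ^ 2 = 1
    rw [← MonoidHom.map_pow, show gx ^ 2 = 1 from by decide, MonoidHom.map_one]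
  · rw [map_pow, FreeGroup.lift_apply_of]
    show (CoprodI.of (gy 1)) ^ 5 = 1
    rw [← MonoidHom.map_pow, show (gy 1) ^ 5 = 1 from by decide, MonoidHom.map_one]

def φ : PresentedGroup relsZ2Z5 →* Pf := PresentedGroup.toGroup hrels

/-- In `G = ⟨x, y | x², y⁵⟩ = ℤ/2 * ℤ/5`, the elements `A = xy³xy³`,
`B = y³xy³x`, `C = xyxy` generate a free subgroup of rank 3: the homomorphism from the free
group of rank 3 sending the free generators to `A, B, C` is injective. -/
theorem stmt_13 :
    Function.Injective
      (FreeGroup.lift (fun i : Fin 3 =>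
        if i = 0 then
          (PresentedGroup.of 0 : PresentedGroup relsZ2Z5) * PresentedGroup.of 1 ^ 3 *
            PresentedGroup.of 0 * PresentedGroup.of 1 ^ 3
        else if i = 1 then
          PresentedGroup.of 1 ^ 3 * PresentedGroup.of 0 *
            PresentedGroup.of 1 ^ 3 * PresentedGroup.of 0
        else
          PresentedGroup.of 0 * PresentedGroup.of 1 *
            PresentedGroup.of 0 * PresentedGroup.of 1) :
        FreeGroup (Fin 3) →* PresentedGroup relsZ2Z5) := by
  set a := (fun i : Fin 3 =>
        if i = 0 then
          (PresentedGroup.of 0 : PresentedGroup relsZ2Z5) * PresentedGroup.of 1 ^ 3 *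
            PresentedGroup.of 0 * PresentedGroup.of 1 ^ 3
        else if i = 1 then
          PresentedGroup.of 1 ^ 3 * PresentedGroup.of 0 *
            PresentedGroup.of 1 ^ 3 * PresentedGroup.of 0
        else
          PresentedGroup.of 0 * PresentedGroup.of 1 *
            PresentedGroup.of 0 * PresentedGroup.of 1) with ha
  have hcomp : φ.comp (FreeGroup.lift a) = FreeGroup.lift bfun := by
    apply FreeGroup.ext_hom
    intro i
    simp only [MonoidHom.comp_apply, FreeGroup.lift_apply_of]
    rcases fin3_cases i with rfl | rfl | rfl
    · show φ (PresentedGroup.of 0 * PresentedGroup.of 1 ^ 3 * PresentedGroup.of 0 *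
          PresentedGroup.of 1 ^ 3) =
        CoprodI.of gx * CoprodI.of (gy 3) * CoprodI.of gx * CoprodI.of (gy 3)
      simp only [map_mul, map_pow]
      rw [show φ (PresentedGroup.of 0) = CoprodI.of gx from PresentedGroup.toGroup.of hrels,
        show φ (PresentedGroup.of 1) = CoprodI.of (gy 1) from PresentedGroup.toGroup.of hrels,
        ← MonoidHom.map_pow, show (gy 1) ^ 3 = gy 3 from by decide]
    · show φ (PresentedGroup.of 1 ^ 3 * PresentedGroup.of 0 * PresentedGroup.of 1 ^ 3 *
          PresentedGroup.of 0) =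
        CoprodI.of (gy 3) * CoprodI.of gx * CoprodI.of (gy 3) * CoprodI.of gx
      simp only [map_mul, map_pow]
      rw [show φ (PresentedGroup.of 0) = CoprodI.of gx from PresentedGroup.toGroup.of hrels,
        show φ (PresentedGroup.of 1) = CoprodI.of (gy 1) from PresentedGroup.toGroup.of hrels,
        ← MonoidHom.map_pow, show (gy 1) ^ 3 = gy 3 from by decide]
    · show φ (PresentedGroup.of 0 * PresentedGroup.of 1 * PresentedGroup.of 0 *
          PresentedGroup.of 1) =
        CoprodI.of gx * CoprodI.of (gy 1) * CoprodI.of gx * CoprodI.of (gy 1)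
      simp only [map_mul]
      rw [show φ (PresentedGroup.of 0) = CoprodI.of gx from PresentedGroup.toGroup.of hrels,
        show φ (PresentedGroup.of 1) = CoprodI.of (gy 1) from PresentedGroup.toGroup.of hrels]
  have : ⇑φ ∘ ⇑(FreeGroup.lift a) = ⇑(FreeGroup.lift bfun) := by
    rw [← MonoidHom.coe_comp, hcomp]
  have hinj : Function.Injective (⇑φ ∘ ⇑(FreeGroup.lift a)) := by
    rw [this]; exact keyinj
  exact hinj.of_comp
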